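/- Let A ∈ ℝ^{n×n} be a row-stochastic matrix, c ∈ ℝ^n with c ≥ 0, p̄ ∈ ℝ^n with p̄ ≥ 0, and let 𝒫_pr(c,p̄) = {p ∈ ℝ^n : 0 ≤ p ≤ p̄, p ≤ c + Aᵀp}. Then for every decreasing function f : [0,p̄] → ℝ, the minimizer of f over 𝒫_pr(c,p̄) exists and is unique; moreover this minimizer p* = p*[A,c,p̄] is the same vector for every choice of decreasing f. -/

import Mathlib

open Matrix Finset

/-- The polytope `𝒫_pr(c, p̄)` of feasible payment vectors under the pro-rata rule:
`0 ≤ p ≤ p̄` and `p ≤ c + Aᵀp`. -/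
def FeasibleVec (n : ℕ) (A : Matrix (Fin n) (Fin n) ℝ) (c pbar p : Fin n → ℝ) : Prop :=
  (∀ i, 0 ≤ p i) ∧ (∀ i, p i ≤ pbar i) ∧ (∀ i, p i ≤ c i + Aᵀ.mulVec p i)

/-- A function `f : [0, p̄] → ℝ` is decreasing: `p ≤ q` with `p ≠ q` implies `f q < f p`. -/
def DecreasingOn (n : ℕ) (pbar : Fin n → ℝ) (f : (Fin n → ℝ) → ℝ) : Prop :=
  ∀ p q : Fin n → ℝ, (∀ i, 0 ≤ p i) → (∀ i, p i ≤ q i) → (∀ i, q i ≤ pbar i) →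
    p ≠ q → f q < f p

/-- For a row-stochastic matrix `A` and nonnegative `c, p̄`, the minimizer over
`𝒫_pr(c, p̄)` of every decreasing function `f` exists, is unique, and is the same
vector `p*` for every choice of decreasing `f`. -/
theorem prorata_min_exists_unique (n : ℕ) (hn : 1 ≤ n)
    (A : Matrix (Fin n) (Fin n) ℝ) (hA0 : ∀ i j, 0 ≤ A i j) (hA1 : ∀ i, ∑ j, A i j = 1)
    (c pbar : Fin n → ℝ) (hc : ∀ i, 0 ≤ c i) (hpbar : ∀ i, 0 ≤ pbar i) :
    ∃ pstar : Fin n → ℝ, FeasibleVec n A c pbar pstar ∧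
      ∀ f : (Fin n → ℝ) → ℝ, DecreasingOn n pbar f →
        (∀ q, FeasibleVec n A c pbar q → f pstar ≤ f q) ∧
        (∀ p, FeasibleVec n A c pbar p →
          (∀ q, FeasibleVec n A c pbar q → f p ≤ f q) → p = pstar) := by
  -- the pointwise supremum of the feasible set
  set u : Fin n → ℝ := fun i => sSup {x | ∃ p, FeasibleVec n A c pbar p ∧ p i = x} with hu
  have h0feas : FeasibleVec n A c pbar (fun _ => 0) := by
    refine ⟨fun i => le_refl 0, fun i => hpbar i, fun i => ?_⟩
    have : Aᵀ.mulVec (fun _ => 0) i = 0 := by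
      simp [Matrix.mulVec, dotProduct]
    rw [this]; simpa using hc i
  have hne : ∀ i, ({x | ∃ p, FeasibleVec n A c pbar p ∧ p i = x}).Nonempty :=
    fun i => ⟨0, ⟨fun _ => 0, h0feas, rfl⟩⟩
  have hbdd : ∀ i, BddAbove {x | ∃ p, FeasibleVec n A c pbar p ∧ p i = x} := by
    intro i
    exact ⟨pbar i, fun x ⟨p, hp, hpi⟩ => hpi ▸ hp.2.1 i⟩
  have hle_u : ∀ p, FeasibleVec n A c pbar p → ∀ i, p i ≤ u i := by
    intro p hp i
    exact le_csSup (hbdd i) ⟨p, hp, rfl⟩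
  have hu0 : ∀ i, 0 ≤ u i := fun i => hle_u _ h0feas i
  have hub : ∀ i, u i ≤ pbar i := by
    intro i
    exact csSup_le (hne i) (fun x ⟨p, hp, hpi⟩ => hpi ▸ hp.2.1 i)
  have hufeas : FeasibleVec n A c pbar u := by
    refine ⟨hu0, hub, fun i => ?_⟩
    refine csSup_le (hne i) ?_
    rintro x ⟨p, hp, rfl⟩
    calc p i ≤ c i + Aᵀ.mulVec p i := hp.2.2 i
      _ ≤ c i + Aᵀ.mulVec u i := by
          apply add_le_add_right
          simp only [Matrix.mulVec, dotProduct, Matrix.transpose_apply]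
          apply Finset.sum_le_sum
          intro j _
          exact mul_le_mul_of_nonneg_left (hle_u p hp j) (hA0 j i)
  refine ⟨u, hufeas, fun f hf => ⟨?_, ?_⟩⟩
  · intro q hq
    by_cases hqe : q = u
    · subst hqe; exact le_refl _
    · exact (hf q u hq.1 (hle_u q hq) hub hqe).le
  · intro p hp hmin
    by_contra hne'
    have h1 : f u < f p := hf p u hp.1 (hle_u p hp) hub hne'
    exact absurd (hmin u hufeas) (not_le.mpr h1)
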